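/- Let G be a finite group, g ∈ G, and k ≥ 1. If g lies in the k-th term F_k(G) of the Fitting series of G, then for every h ∈ G, g lies in F_k(⟨g, h⟩). -/

import Mathlib

/-- The Fitting subgroup: the join of all nilpotent normal subgroups. -/
def FittingSubgroup (G : Type*) [Group G] : Subgroup G :=
  ⨆ N : {N : Subgroup G // N.Normal ∧ Group.IsNilpotent N}, (N : Subgroup G)

theorem map_conj_of_normal {G : Type*} [Group G] {N : Subgroup G} (hN : N.Normal) (g : G) :
    N.map (MulAut.conj g).toMonoidHom = N := by
  apply le_antisymm
  · rintro x ⟨n, hn, rfl⟩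
    exact hN.conj_mem n hn g
  · intro n hn
    exact ⟨g⁻¹ * n * g, by simpa using hN.conj_mem n hn g⁻¹, by simp [MulAut.conj]; group⟩

instance FittingSubgroup.normal (G : Type*) [Group G] : (FittingSubgroup G).Normal := by
  constructor
  intro n hn g
  have h : (FittingSubgroup G).map (MulAut.conj g).toMonoidHom = FittingSubgroup G := by
    unfold FittingSubgroup
    rw [Subgroup.map_iSup]
    congr 1
    funext N
    exact map_conj_of_normal N.2.1 g
  rw [← h]
  exact ⟨n, hn, rfl⟩

/-- The Fitting series, bundled with normality:
`F 0 = ⊥` and `F (k+1) / F k = F(G / F k)`. -/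
def FittingSeriesAux (G : Type*) [Group G] : ℕ → {H : Subgroup G // H.Normal}
  | 0 => ⟨⊥, inferInstance⟩
  | (k+1) =>
      letI : (FittingSeriesAux G k : Subgroup G).Normal := (FittingSeriesAux G k).2
      ⟨(FittingSubgroup (G ⧸ (FittingSeriesAux G k : Subgroup G))).comap
          (QuotientGroup.mk' (FittingSeriesAux G k : Subgroup G)),
        (FittingSubgroup.normal _).comap _⟩

/-- The `k`-th term of the Fitting series of `G`. -/
def FittingSeries (G : Type*) [Group G] (k : ℕ) : Subgroup G := FittingSeriesAux G k


open Subgroup Pointwise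

section AuxFitting

variable {G : Type*} [Group G]

lemma pgroup_eq_bot_of_not_dvd' {p : ℕ} [Fact p.Prime] [Finite G] {H : Subgroup G}
    (hH : IsPGroup p H) (hp : ¬ p ∣ Nat.card G) : H = ⊥ := by
  obtain ⟨n, hn⟩ := hH.exists_card_eq
  rcases Nat.eq_zero_or_pos n with rfl | hpos
  · rw [pow_zero] at hn
    exact Subgroup.card_eq_one.mp hn
  · exact absurd ((dvd_pow_self p hpos.ne').trans (hn ▸ Subgroup.card_subgroup_dvd_card H)) hp

lemma normal_le_sylow' {p : ℕ} [Fact p.Prime] [Finite G] {R : Subgroup G}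
    (hR : IsPGroup p R) (hRn : R.Normal) (S : Sylow p G) : R ≤ ↑S := by
  obtain ⟨T, hT⟩ := hR.exists_le_sylow
  obtain ⟨g, rfl⟩ := MulAction.exists_smul_eq G T S
  have h : R = MulAut.conj g • R := (Subgroup.Normal.conj_smul_eq_self g R (h := hRn)).symm
  rw [Sylow.coe_subgroup_smul, h]
  exact Subgroup.pointwise_smul_le_pointwise_smul_iff.mpr hT

lemma card_range_dvd_index' {H : Type*} [Group H] [Finite G] (f : G →* H)
    {K : Subgroup G} (hK : K ≤ f.ker) : Nat.card f.range ∣ K.index := by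
  have h : Nat.card f.range = f.ker.index := by
    rw [Subgroup.index]
    exact (Nat.card_congr (QuotientGroup.quotientKerEquivRange f).toEquiv).symm
  rw [h]
  exact Subgroup.index_dvd_of_le hK

lemma exists_normal_pgroup' (p : ℕ) [Fact p.Prime] [Finite G] {N : Subgroup G}
    (hN : N.Normal) (hNn : Group.IsNilpotent N) :
    ∃ P : Subgroup G, P ≤ N ∧ IsPGroup p P ∧ P.Normal ∧
      ∀ {H : Type*} [Group H] (f : G →* H), P ≤ f.ker →
        ¬ p ∣ Nat.card ((N.map f) : Subgroup H) := by
  haveI := hNn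
  haveI := hN
  obtain ⟨P₀⟩ := (inferInstance : Nonempty (Sylow p N))
  have hiff : Group.IsNilpotent N ↔
      ∀ (q : ℕ) (_hq : Fact q.Prime) (Q : Sylow q N), (↑Q : Subgroup N).Normal :=
    (isNilpotent_of_finite_tfae (G := N)).out 0 3
  have hP₀ : (↑P₀ : Subgroup N).Normal := hiff.mp hNn p ‹Fact p.Prime› P₀
  haveI : (↑P₀ : Subgroup N).Characteristic := P₀.characteristic_of_normal hP₀
  refine ⟨(↑P₀ : Subgroup N).map N.subtype, map_subtype_le _, P₀.isPGroup'.map _,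
    ConjAct.normal_of_characteristic_of_normal, ?_⟩
  intro H _ f hPker
  intro hdvd
  have h1 : Nat.card (N.map f) ∣ (↑P₀ : Subgroup N).index := by
    have hr : (f.comp N.subtype).range = N.map f := by
      rw [MonoidHom.range_comp, Subgroup.range_subtype]
    rw [← hr]
    apply card_range_dvd_index'
    intro x hx
    have : (x : G) ∈ (↑P₀ : Subgroup N).map N.subtype := Subgroup.apply_coe_mem_map _ _ ⟨x, hx⟩
    exact hPker this
  exact P₀.not_dvd_index (hdvd.trans h1)

/-- Fitting's theorem, top version. -/
lemma isNilpotent_of_sup_eq_top' [Finite G] {N M : Subgroup G} (hN : N.Normal) (hM : M.Normal)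
    (hNn : Group.IsNilpotent N) (hMn : Group.IsNilpotent M) (h : N ⊔ M = ⊤) :
    Group.IsNilpotent G := by
  apply (isNilpotent_of_finite_tfae.out 3 0).mp
  intro p hp S
  haveI := hp
  obtain ⟨P, hPN, hPp, hPnorm, hPind⟩ := exists_normal_pgroup' p hN hNn
  obtain ⟨Q, hQM, hQp, hQnorm, hQind⟩ := exists_normal_pgroup' p hM hMn
  haveI := hPnorm; haveI := hQnorm
  set R : Subgroup G := P ⊔ Q with hR
  haveI hRnorm : R.Normal := Subgroup.sup_normal P Q
  have hRp : IsPGroup p R := IsPGroup.to_sup_of_normal_right hPp hQp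
  have hRS : R ≤ ↑S := normal_le_sylow' hRp hRnorm S
  set π := QuotientGroup.mk' R with hπ
  have hPker : P ≤ π.ker := by rw [QuotientGroup.ker_mk']; exact le_sup_left
  have hQker : Q ≤ π.ker := by rw [QuotientGroup.ker_mk']; exact le_sup_right
  set N' : Subgroup (G ⧸ R) := N.map π with hN'
  set M' : Subgroup (G ⧸ R) := M.map π with hM'
  haveI hN'norm : N'.Normal := hN.map π (QuotientGroup.mk'_surjective R)
  have hsup : N' ⊔ M' = ⊤ := by
    rw [hN', hM', ← Subgroup.map_sup, h, ← MonoidHom.range_eq_map,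
      MonoidHom.range_eq_top_of_surjective _ (QuotientGroup.mk'_surjective R)]
  have hcard : ¬ p ∣ Nat.card (G ⧸ R) := by
    have hcard1 : ¬ p ∣ Nat.card N' := hPind π hPker
    have hcard2 : ¬ p ∣ N'.index := by
      intro hdvd
      apply hQind ((QuotientGroup.mk' N').comp π) ?_ ?_
      · intro x hx
        have : π x ∈ N' := by
          have : π x = 1 := hQker hx
          rw [this]; exact one_mem _
        simpa [MonoidHom.mem_ker] using this
      · have hr : M.map ((QuotientGroup.mk' N').comp π) = ⊤ := by
          rw [← Subgroup.map_map]
          have hbot : N'.map (QuotientGroup.mk' N') = ⊥ := by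
            rw [Subgroup.map_eq_bot_iff, QuotientGroup.ker_mk']
          calc M'.map (QuotientGroup.mk' N')
              = (N' ⊔ M').map (QuotientGroup.mk' N') := by
                rw [Subgroup.map_sup, hbot, bot_sup_eq]
            _ = ⊤ := by rw [hsup, ← MonoidHom.range_eq_map,
                MonoidHom.range_eq_top_of_surjective _ (QuotientGroup.mk'_surjective N')]
        rw [hr]
        have htop : Nat.card (⊤ : Subgroup ((G ⧸ R) ⧸ N')) = N'.index := by
          rw [Subgroup.index]
          exact Nat.card_congr Subgroup.topEquiv.toEquiv
        rw [htop]
        exact hdvd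
    rw [← Subgroup.card_mul_index N']
    exact hp.out.not_dvd_mul hcard1 hcard2
  have hSR : (↑S : Subgroup G) ≤ R := by
    have himg : (↑S : Subgroup G).map π = ⊥ := pgroup_eq_bot_of_not_dvd' (S.isPGroup'.map π) hcard
    intro x hx
    have hm : π x ∈ ((↑S : Subgroup G).map π) := Subgroup.mem_map_of_mem π hx
    rw [himg, Subgroup.mem_bot] at hm
    have hm' : x ∈ π.ker := hm
    rwa [QuotientGroup.ker_mk'] at hm'
  have hfin : (↑S : Subgroup G) = R := le_antisymm hSR hRS
  rw [hfin]
  exact hRnorm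

/-- Fitting's theorem. -/
lemma isNilpotent_sup' [Finite G] {N M : Subgroup G} (hN : N.Normal) (hM : M.Normal)
    (hNn : Group.IsNilpotent N) (hMn : Group.IsNilpotent M) :
    Group.IsNilpotent ↥(N ⊔ M) := by
  set K := N ⊔ M with hK
  have hNK : N ≤ K := le_sup_left
  have hMK : M ≤ K := le_sup_right
  apply isNilpotent_of_sup_eq_top' (hN.subgroupOf K) (hM.subgroupOf K)
  · exact nilpotent_of_mulEquiv (Subgroup.subgroupOfEquivOfLe hNK).symm
  · exact nilpotent_of_mulEquiv (Subgroup.subgroupOfEquivOfLe hMK).symm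
  · rw [← Subgroup.subgroupOf_sup hNK hMK, ← hK, Subgroup.subgroupOf_self]

lemma isNilpotent_fittingSubgroup (G : Type*) [Group G] [Finite G] :
    Group.IsNilpotent (FittingSubgroup G) := by
  classical
  have key : ∀ t : Finset (Subgroup G), (∀ N ∈ t, N.Normal ∧ Group.IsNilpotent N) →
      (t.sup id).Normal ∧ Group.IsNilpotent ↥(t.sup id) := by
    intro t
    induction t using Finset.induction_on with
    | empty => intro _; rw [Finset.sup_empty]; exact ⟨inferInstance, inferInstance⟩
    | @insert a s ha ih =>
      intro ht
      have h1 := ht a (Finset.mem_insert_self a s)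
      have h2 := ih (fun N hN => ht N (Finset.mem_insert_of_mem hN))
      rw [Finset.sup_insert, id_eq]
      haveI := h1.1; haveI := h2.1
      exact ⟨Subgroup.sup_normal _ _, isNilpotent_sup' h1.1 h2.1 h1.2 h2.2⟩
  set s : Set (Subgroup G) := {N | N.Normal ∧ Group.IsNilpotent N} with hs
  have hF : FittingSubgroup G = sSup s := by
    rw [FittingSubgroup, sSup_eq_iSup' s]; rfl
  have hfin : s.Finite := Set.toFinite s
  have hsup : sSup s = hfin.toFinset.sup id := by
    rw [Finset.sup_id_eq_sSup, Set.Finite.coe_toFinset]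
  have hkey := key hfin.toFinset (fun N hN => by
    rw [Set.Finite.mem_toFinset] at hN; exact hN)
  rw [hF, hsup]
  exact hkey.2

lemma subgroupOf_fittingSubgroup_le [Finite G] (H : Subgroup G) :
    (FittingSubgroup G).subgroupOf H ≤ FittingSubgroup H := by
  set K := FittingSubgroup G with hK
  haveI := isNilpotent_fittingSubgroup G
  have h1 : (K.subgroupOf H).Normal := Subgroup.normal_subgroupOf
  have heq : K.subgroupOf H = (K ⊓ H).subgroupOf H := by
    ext x
    simp [Subgroup.mem_subgroupOf, x.2]
  have h2 : Group.IsNilpotent ↥(K.subgroupOf H) := by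
    have e1 : ↥((K ⊓ H).subgroupOf K) ≃* ↥(K ⊓ H) :=
      Subgroup.subgroupOfEquivOfLe inf_le_left
    haveI : Group.IsNilpotent ↥(K ⊓ H) := nilpotent_of_mulEquiv e1
    have e2 : ↥(K ⊓ H) ≃* ↥((K ⊓ H).subgroupOf H) :=
      (Subgroup.subgroupOfEquivOfLe inf_le_right).symm
    haveI : Group.IsNilpotent ↥((K ⊓ H).subgroupOf H) := nilpotent_of_mulEquiv e2
    rw [heq]
    infer_instance
  exact le_iSup (fun N : {N : Subgroup H // N.Normal ∧ Group.IsNilpotent N} =>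
    (N : Subgroup H)) ⟨K.subgroupOf H, h1, h2⟩

lemma map_fittingSubgroup_le {G' : Type*} [Group G'] [Finite G] (f : G →* G')
    (hf : Function.Surjective f) : (FittingSubgroup G).map f ≤ FittingSubgroup G' := by
  set K := FittingSubgroup G with hK
  haveI := isNilpotent_fittingSubgroup G
  have h1 : (K.map f).Normal := Subgroup.Normal.map inferInstance f hf
  have h2 : Group.IsNilpotent ↥(K.map f) := by
    haveI : Group.IsNilpotent ↥(f.comp K.subtype).range :=
      nilpotent_of_surjective _ ((f.comp K.subtype).rangeRestrict_surjective)
    have he : (f.comp K.subtype).range = K.map f := by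
      rw [MonoidHom.range_comp, Subgroup.range_subtype]
    exact nilpotent_of_mulEquiv (MulEquiv.subgroupCongr he)
  exact le_iSup (fun N : {N : Subgroup G' // N.Normal ∧ Group.IsNilpotent N} =>
    (N : Subgroup G')) ⟨K.map f, h1, h2⟩

instance fittingSeries_normal (G : Type*) [Group G] (k : ℕ) : (FittingSeries G k).Normal :=
  (FittingSeriesAux G k).2

lemma fittingSeries_subgroupOf_le [Finite G] (k : ℕ) (H : Subgroup G) :
    (FittingSeries G k).subgroupOf H ≤ FittingSeries H k := by
  induction k with
  | zero =>
    intro x hx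
    have hx' : (x : G) ∈ (⊥ : Subgroup G) := hx
    rw [Subgroup.mem_bot] at hx'
    show x ∈ (⊥ : Subgroup ↥H)
    rw [Subgroup.mem_bot]
    exact Subtype.ext hx'
  | succ k ih =>
    intro x hx
    set A := FittingSeries G k with hA
    set B := FittingSeries ↥H k with hB
    have hx' : QuotientGroup.mk' A (x : G) ∈ FittingSubgroup (G ⧸ A) := hx
    set f : ↥H →* G ⧸ A := (QuotientGroup.mk' A).comp H.subtype with hf
    have hker : f.ker ≤ B := by
      intro y hy
      apply ih
      have hyA : (y : G) ∈ A := by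
        rw [← QuotientGroup.ker_mk' A]
        exact hy
      exact hyA
    have hx2 : (⟨f x, MonoidHom.mem_range.mpr ⟨x, rfl⟩⟩ : ↥f.range) ∈
        FittingSubgroup ↥f.range := by
      apply subgroupOf_fittingSubgroup_le f.range
      show f x ∈ FittingSubgroup (G ⧸ A)
      exact hx'
    set e := QuotientGroup.quotientKerEquivRange f with he
    set θ : (↥H ⧸ f.ker) →* (↥H ⧸ B) :=
      QuotientGroup.map f.ker B (MonoidHom.id ↥H) (fun y hy => hker hy) with hθ
    have hx3 : e.symm ⟨f x, MonoidHom.mem_range.mpr ⟨x, rfl⟩⟩ = QuotientGroup.mk x := by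
      apply e.injective
      rw [MulEquiv.apply_symm_apply]
      rfl
    have hθsurj : Function.Surjective θ := by
      intro z
      obtain ⟨y, rfl⟩ := QuotientGroup.mk'_surjective B z
      exact ⟨QuotientGroup.mk y, rfl⟩
    have hmem : θ (e.symm ⟨f x, MonoidHom.mem_range.mpr ⟨x, rfl⟩⟩) ∈
        FittingSubgroup (↥H ⧸ B) := by
      apply map_fittingSubgroup_le (θ.comp e.symm.toMonoidHom)
        (hθsurj.comp e.symm.surjective)
      exact Subgroup.mem_map_of_mem _ hx2
    rw [hx3] at hmem
    show x ∈ (FittingSubgroup (↥H ⧸ B)).comap (QuotientGroup.mk' B)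
    rw [Subgroup.mem_comap]
    convert hmem using 2
    rfl

end AuxFitting

theorem stmt_14 {G : Type*} [Group G] [Finite G] (g : G) (k : ℕ) (hk : 1 ≤ k)
    (hg : g ∈ FittingSeries G k) :
    ∀ h : G,
      g ∈ (FittingSeries (Subgroup.closure {g, h}) k).map
        (Subgroup.closure {g, h}).subtype := by
  intro h
  have hgH : g ∈ Subgroup.closure {g, h} := Subgroup.subset_closure (Set.mem_insert g {h})
  have hmem : (⟨g, hgH⟩ : ↥(Subgroup.closure {g, h})) ∈
      (FittingSeries G k).subgroupOf (Subgroup.closure {g, h}) := hg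
  have := fittingSeries_subgroupOf_le k (Subgroup.closure {g, h}) hmem
  exact ⟨⟨g, hgH⟩, this, rfl⟩
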